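/- Let Γ be a locally compact group acting continuously on a locally compact Hausdorff space Y such that the action is proper (the map Γ × Y → Y × Y, (γ,y) ↦ (γ·y, y), is proper) and cocompact (there is a compact K ⊆ Y with Γ·K = Y), and suppose Y carries a uniform structure inducing its topology in which every entourage contains a Γ-invariant entourage. Let Z be any uniform space equipped with an action of Γ whose uniform structure is Γ-invariant (every entourage of Z contains a Γ-invariant entourage). Then every continuous Γ-equivariant map f : Y → Z is uniformly continuous. -/

import Mathlib

/-- Let `Γ` be a locally compact group acting continuously, properly and
cocompactly on a locally compact Hausdorff space `Y` whose topology comes from a `Γ`-invariant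
uniform structure. Let `Z` be any uniform `Γ`-space with `Γ`-invariant uniform structure.
Then every continuous `Γ`-equivariant map `f : Y → Z` is uniformly continuous. -/
theorem stmt_2 {Γ Y Z : Type*} [Group Γ] [TopologicalSpace Γ] [IsTopologicalGroup Γ]
    [LocallyCompactSpace Γ] [UniformSpace Y] [T2Space Y] [LocallyCompactSpace Y]
    [MulAction Γ Y] [ContinuousSMul Γ Y] [UniformSpace Z] [MulAction Γ Z]
    (hproper : IsProperMap (fun p : Γ × Y => (p.1 • p.2, p.2)))
    (hcocompact : ∃ K : Set Y, IsCompact K ∧ ∀ y : Y, ∃ γ : Γ, ∃ k ∈ K, y = γ • k)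
    (hinvY : ∀ U ∈ uniformity Y, ∃ V ∈ uniformity Y, V ⊆ U ∧
      ∀ (γ : Γ) (y y' : Y), (γ • y, γ • y') ∈ V ↔ (y, y') ∈ V)
    (hinvZ : ∀ U ∈ uniformity Z, ∃ V ∈ uniformity Z, V ⊆ U ∧
      ∀ (γ : Γ) (z z' : Z), (γ • z, γ • z') ∈ V ↔ (z, z') ∈ V)
    (f : Y → Z) (hf : Continuous f)
    (hequiv : ∀ (γ : Γ) (y : Y), f (γ • y) = γ • f y) :
    UniformContinuous f := by
  obtain ⟨K, hK, hKcov⟩ := hcocompact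
  -- a compact neighborhood K' of K
  obtain ⟨K', hK', hKK'⟩ := exists_compact_superset hK
  rw [uniformContinuous_def]
  intro W hW
  -- Γ-invariant entourage V ⊆ W of Z
  obtain ⟨V, hV, hVW, hVinv⟩ := hinvZ W hW
  -- f is uniformly continuous on the compact set K'
  have hucK' : UniformContinuousOn f K' := by
    rw [uniformContinuousOn_iff_restrict]
    haveI : CompactSpace K' := isCompact_iff_compactSpace.mp hK'
    exact CompactSpace.uniformContinuous_of_continuous (hf.comp continuous_subtype_val)
  obtain ⟨U', hU', hU'V⟩ : ∃ U' ∈ uniformity Y,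
      ∀ x ∈ K', ∀ y ∈ K', (x, y) ∈ U' → (f x, f y) ∈ V := by
    have := ((Filter.basis_sets (uniformity Y)).uniformContinuousOn_iff
      (Filter.basis_sets (uniformity Z))).mp hucK' V hV
    obtain ⟨U', hU', h⟩ := this
    exact ⟨U', hU', fun x hx y hy hxy => h x hx y hy hxy⟩
  -- entourage E whose thickening of K lies in K'
  obtain ⟨E, hE, hEK⟩ : ∃ E ∈ uniformity Y, ∀ k ∈ K, ∀ y, (k, y) ∈ E → y ∈ K' := by
    have hnhds : K' ∈ nhdsSet K := by
      rw [mem_nhdsSet_iff_forall]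
      intro x hx
      exact mem_interior_iff_mem_nhds.mp (hKK' hx)
    obtain ⟨E, hE, hEsub⟩ := (hK.nhdsSet_basis_uniformity
      (Filter.basis_sets (uniformity Y))).mem_iff.mp hnhds
    refine ⟨E, hE, fun k hk y hky => hEsub ?_⟩
    exact Set.mem_biUnion hk hky
  -- Γ-invariant entourage U ⊆ U' ∩ E of Y
  obtain ⟨U, hU, hUsub, hUinv⟩ := hinvY (U' ∩ E) (Filter.inter_mem hU' hE)
  refine Filter.mem_of_superset hU ?_
  rintro ⟨y, y'⟩ hyy'
  obtain ⟨γ, k, hk, rfl⟩ := hKcov y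
  have h1 : (k, γ⁻¹ • y') ∈ U := by
    have := (hUinv γ k (γ⁻¹ • y')).mpr
    rw [smul_inv_smul] at this
    exact (hUinv γ k (γ⁻¹ • y')).mp (by rwa [smul_inv_smul])
  have h2 : γ⁻¹ • y' ∈ K' := hEK k hk _ (hUsub h1).2
  have h3 : (f k, f (γ⁻¹ • y')) ∈ V := hU'V k (hKK'.trans interior_subset hk) _ h2 (hUsub h1).1
  have h4 : (f (γ • k), f y') ∈ V := by
    have := (hVinv γ (f k) (f (γ⁻¹ • y'))).mpr h3
    rwa [← hequiv, ← hequiv, smul_inv_smul] at this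
  exact hVW h4
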